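/- Let X be a finite type, Q a probability mass function on X, and Z : X × X → (0, ∞). For λ ≥ 1, define E_x(λ) = −λ · log( ∑_{x,x'} Q(x) Q(x') Z(x,x')^(1/λ) ). Then the derivative of E_x with respect to λ equals the relative entropy D(Ψ_λ ‖ Q⊗Q), where Ψ_λ(x,x') = Q(x)Q(x') Z(x,x')^(1/λ) / (∑_{u,u'} Q(u)Q(u') Z(u,u')^(1/λ)). In particular E_x is nondecreasing in λ on [1, ∞). -/

import Mathlib

open Real Finset

/-- The derivative of the expurgated-type function
`E_x λ = -λ log (∑ x x', Q x Q x' Z(x,x')^(1/λ))` at any `λ ≥ 1` equals the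
relative entropy `D(Ψ_λ ‖ Q ⊗ Q)` where
`Ψ_λ (x,x') = Q x Q x' Z(x,x')^(1/λ) / (∑ u u', Q u Q u' Z(u,u')^(1/λ))`.
In particular `E_x` is nondecreasing on `[1,∞)`. -/
theorem deriv_Ex_eq_relativeEntropy {X : Type*} [Fintype X]
    (Q : X → ℝ) (hQpos : ∀ x, 0 < Q x) (hQ1 : ∑ x, Q x = 1)
    (Z : X × X → ℝ) (hZ : ∀ p, 0 < Z p) :
    (∀ l : ℝ, 1 ≤ l →
      HasDerivAt (fun lam : ℝ =>
          -lam * Real.log (∑ x, ∑ x', Q x * Q x' * Z (x, x') ^ (1 / lam)))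
        (∑ x, ∑ x',
          (Q x * Q x' * Z (x, x') ^ (1 / l) /
              (∑ u, ∑ u', Q u * Q u' * Z (u, u') ^ (1 / l))) *
            Real.log ((Q x * Q x' * Z (x, x') ^ (1 / l) /
                (∑ u, ∑ u', Q u * Q u' * Z (u, u') ^ (1 / l))) /
              (Q x * Q x'))) l) ∧
    MonotoneOn (fun lam : ℝ =>
        -lam * Real.log (∑ x, ∑ x', Q x * Q x' * Z (x, x') ^ (1 / lam)))
      (Set.Ici (1:ℝ)) := by
  -- the partition function
  set S : ℝ → ℝ := fun lam => ∑ x, ∑ x', Q x * Q x' * Z (x, x') ^ (1 / lam) with hSdef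
  have hXne : (Finset.univ : Finset X).Nonempty := by
    rcases (Finset.univ : Finset X).eq_empty_or_nonempty with h | h
    · rw [h] at hQ1; simp at hQ1
    · exact h
  have hSpos : ∀ lam : ℝ, 0 < S lam := by
    intro lam
    refine Finset.sum_pos (fun x _ => Finset.sum_pos (fun x' _ => ?_) hXne) hXne
    exact mul_pos (mul_pos (hQpos x) (hQpos x')) (Real.rpow_pos_of_pos (hZ _) _)
  -- derivative of S
  have hSderiv : ∀ l : ℝ, 1 ≤ l →
      HasDerivAt S
        (∑ x, ∑ x', Q x * Q x' *
          (Z (x, x') ^ (1 / l) * Real.log (Z (x, x')) * (-(l ^ 2)⁻¹))) l := by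
    intro l hl
    have hl0 : l ≠ 0 := by positivity
    refine HasDerivAt.fun_sum fun x _ => HasDerivAt.fun_sum fun x' _ => ?_
    have h1 : HasDerivAt (fun lam : ℝ => 1 / lam) (-(l ^ 2)⁻¹) l := by
      simpa only [one_div] using hasDerivAt_inv hl0
    have h2 : HasDerivAt (fun t : ℝ => Z (x, x') ^ t)
        (Z (x, x') ^ (1 / l) * Real.log (Z (x, x'))) (1 / l) :=
      (Real.hasStrictDerivAt_const_rpow (hZ (x, x')) (1 / l)).hasDerivAt
    have h3 := (h2.comp l h1).const_mul (Q x * Q x')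
    convert h3 using 1 <;> rfl
  -- derivative of E
  have hmain : ∀ l : ℝ, 1 ≤ l →
      HasDerivAt (fun lam : ℝ => -lam * Real.log (S lam))
        (∑ x, ∑ x',
          (Q x * Q x' * Z (x, x') ^ (1 / l) / S l) *
            Real.log ((Q x * Q x' * Z (x, x') ^ (1 / l) / S l) / (Q x * Q x'))) l := by
    intro l hl
    have hl0 : l ≠ 0 := by positivity
    have hS := hSderiv l hl
    have hlog : HasDerivAt (fun lam => Real.log (S lam))
        ((∑ x, ∑ x', Q x * Q x' *
          (Z (x, x') ^ (1 / l) * Real.log (Z (x, x')) * (-(l ^ 2)⁻¹))) / S l) l :=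
      hS.log (ne_of_gt (hSpos l))
    have hE := ((hasDerivAt_id l).neg.mul hlog)
    have key :
        (∑ x, ∑ x',
          (Q x * Q x' * Z (x, x') ^ (1 / l) / S l) *
            Real.log ((Q x * Q x' * Z (x, x') ^ (1 / l) / S l) / (Q x * Q x'))) =
        -1 * Real.log (S l) +
          -l * ((∑ x, ∑ x', Q x * Q x' *
            (Z (x, x') ^ (1 / l) * Real.log (Z (x, x')) * (-(l ^ 2)⁻¹))) / S l) := by
      have hs := hSpos l
      have hsne : S l ≠ 0 := ne_of_gt hs
      -- rewrite each log term
      have hterm : ∀ x x' : X,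
          (Q x * Q x' * Z (x, x') ^ (1 / l) / S l) *
            Real.log ((Q x * Q x' * Z (x, x') ^ (1 / l) / S l) / (Q x * Q x')) =
          (Q x * Q x' * (Z (x, x') ^ (1 / l) * Real.log (Z (x, x')))) * (1 / (l * S l))
            - (Q x * Q x' * Z (x, x') ^ (1 / l) / S l) * Real.log (S l) := by
        intro x x'
        have ha : Q x * Q x' ≠ 0 := ne_of_gt (mul_pos (hQpos x) (hQpos x'))
        have hzp : (0:ℝ) < Z (x, x') ^ (1 / l) := Real.rpow_pos_of_pos (hZ _) _
        have harg : (Q x * Q x' * Z (x, x') ^ (1 / l) / S l) / (Q x * Q x') =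
            Z (x, x') ^ (1 / l) / S l := by
          field_simp
          exact div_self ha
        rw [harg, Real.log_div (ne_of_gt hzp) hsne, Real.log_rpow (hZ _)]
        field_simp
      calc (∑ x, ∑ x',
          (Q x * Q x' * Z (x, x') ^ (1 / l) / S l) *
            Real.log ((Q x * Q x' * Z (x, x') ^ (1 / l) / S l) / (Q x * Q x')))
          = ∑ x, ∑ x',
            ((Q x * Q x' * (Z (x, x') ^ (1 / l) * Real.log (Z (x, x')))) * (1 / (l * S l))
              - (Q x * Q x' * Z (x, x') ^ (1 / l) / S l) * Real.log (S l)) := by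
            exact Finset.sum_congr rfl fun x _ => Finset.sum_congr rfl fun x' _ => hterm x x'
        _ = (∑ x, ∑ x', Q x * Q x' * (Z (x, x') ^ (1 / l) * Real.log (Z (x, x'))))
              * (1 / (l * S l))
            - ((∑ x, ∑ x', Q x * Q x' * Z (x, x') ^ (1 / l)) / S l) * Real.log (S l) := by
            rw [Finset.sum_mul, Finset.sum_div, Finset.sum_mul, ← Finset.sum_sub_distrib]
            refine Finset.sum_congr rfl fun x _ => ?_
            rw [Finset.sum_mul, Finset.sum_div, Finset.sum_mul, ← Finset.sum_sub_distrib]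
        _ = -1 * Real.log (S l) +
            -l * ((∑ x, ∑ x', Q x * Q x' *
              (Z (x, x') ^ (1 / l) * Real.log (Z (x, x')))) * (-(l ^ 2)⁻¹) / S l) := by
            rw [show (∑ x, ∑ x', Q x * Q x' * Z (x, x') ^ (1 / l)) = S l from rfl]
            field_simp
            ring
        _ = -1 * Real.log (S l) +
            -l * ((∑ x, ∑ x', Q x * Q x' *
              (Z (x, x') ^ (1 / l) * Real.log (Z (x, x')) * (-(l ^ 2)⁻¹))) / S l) := by
            have hpull : (∑ x, ∑ x', Q x * Q x' *
                (Z (x, x') ^ (1 / l) * Real.log (Z (x, x')) * (-(l ^ 2)⁻¹))) =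
                (∑ x, ∑ x', Q x * Q x' * (Z (x, x') ^ (1 / l) * Real.log (Z (x, x')))) *
                  (-(l ^ 2)⁻¹) := by
              rw [Finset.sum_mul]
              refine Finset.sum_congr rfl fun x _ => ?_
              rw [Finset.sum_mul]
              exact Finset.sum_congr rfl fun x' _ => by ring
            rw [hpull]
    rw [key]
    convert hE using 1 <;> rfl
  -- nonnegativity of the relative entropy
  have hD_nonneg : ∀ l : ℝ, 1 ≤ l →
      0 ≤ (∑ x, ∑ x',
          (Q x * Q x' * Z (x, x') ^ (1 / l) / S l) *
            Real.log ((Q x * Q x' * Z (x, x') ^ (1 / l) / S l) / (Q x * Q x'))) := by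
    intro l hl
    have hs := hSpos l
    set P : X → X → ℝ := fun x x' => Q x * Q x' * Z (x, x') ^ (1 / l) / S l with hP
    have hPpos : ∀ x x', 0 < P x x' := fun x x' =>
      div_pos (mul_pos (mul_pos (hQpos x) (hQpos x')) (Real.rpow_pos_of_pos (hZ _) _)) hs
    have hPsum : (∑ x, ∑ x', P x x') = 1 := by
      rw [show (∑ x, ∑ x', P x x') = (∑ x, ∑ x', Q x * Q x' * Z (x, x') ^ (1 / l)) / S l by
        rw [Finset.sum_div]; exact Finset.sum_congr rfl fun x _ => (Finset.sum_div ..).symm]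
      exact div_self (ne_of_gt hs)
    have hQsum : (∑ x, ∑ x', Q x * Q x') = 1 := by
      have : (∑ x, ∑ x', Q x * Q x') = (∑ x, Q x) * (∑ x, Q x) := by
        rw [Finset.sum_mul]
        exact Finset.sum_congr rfl fun x _ => (Finset.mul_sum ..).symm
      rw [this, hQ1, one_mul]
    have hle : ∀ x x', P x x' - Q x * Q x' ≤ P x x' * Real.log (P x x' / (Q x * Q x')) := by
      intro x x'
      have hq : (0:ℝ) < Q x * Q x' := mul_pos (hQpos x) (hQpos x')
      have hr : (0:ℝ) < Q x * Q x' / P x x' := div_pos hq (hPpos x x')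
      have h1 : Real.log (Q x * Q x' / P x x') ≤ Q x * Q x' / P x x' - 1 :=
        Real.log_le_sub_one_of_pos hr
      have h2 : Real.log (P x x' / (Q x * Q x')) = -Real.log (Q x * Q x' / P x x') := by
        rw [← Real.log_inv, inv_div]
      rw [h2]
      have := mul_le_mul_of_nonneg_left h1 (le_of_lt (hPpos x x'))
      have heq : P x x' * (Q x * Q x' / P x x' - 1) = Q x * Q x' - P x x' := by
        rw [mul_sub, mul_one, mul_comm (P x x'), div_mul_cancel₀ _ (ne_of_gt (hPpos x x'))]
      rw [heq] at this
      linarith [this]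
    have hsum : (∑ x, ∑ x', (P x x' - Q x * Q x')) ≤
        ∑ x, ∑ x', P x x' * Real.log (P x x' / (Q x * Q x')) :=
      Finset.sum_le_sum fun x _ => Finset.sum_le_sum fun x' _ => hle x x'
    have hzero : (∑ x, ∑ x', (P x x' - Q x * Q x')) = 0 := by
      rw [show (∑ x, ∑ x', (P x x' - Q x * Q x')) =
          (∑ x, ∑ x', P x x') - (∑ x, ∑ x', Q x * Q x') by
        rw [← Finset.sum_sub_distrib]
        exact Finset.sum_congr rfl fun x _ => Finset.sum_sub_distrib ..]
      rw [hPsum, hQsum, sub_self]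
    linarith [hsum, hzero]
  refine ⟨hmain, ?_⟩
  refine monotoneOn_of_deriv_nonneg (convex_Ici 1) ?_ ?_ ?_
  · exact fun x hx => ((hmain x hx).continuousAt).continuousWithinAt
  · intro x hx
    rw [interior_Ici] at hx
    exact ((hmain x (le_of_lt hx)).differentiableAt).differentiableWithinAt
  · intro x hx
    rw [interior_Ici] at hx
    rw [(hmain x (le_of_lt hx)).deriv]
    exact hD_nonneg x (le_of_lt hx)
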